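/- Let g : [0,1] → ℝ be a function with ∫₀¹ s^k (g(s)² + g'(s)²) ds < ∞ for some real k > 1. Then there exists a constant C depending only on k such that ∫₀¹ s^{k-2} g(s)² ds ≤ C ∫₀¹ s^k (g(s)² + g'(s)²) ds. -/

import Mathlib

open MeasureTheory Set intervalIntegral

private lemma hardy_amgm (ε X Y Z p q : ℝ) (hε : 0 < ε) (hY : 0 < Y)
    (hZ : Z ^ 2 = X * Y) :
    0 ≤ ε * (X * p ^ 2) + (1 / ε) * (Y * q ^ 2) + 2 * Z * p * q := by
  have h := sq_nonneg (ε * Z * p + Y * q)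
  have h2 : 0 ≤ (ε * Y) * (ε * (X * p ^ 2) + (1 / ε) * (Y * q ^ 2) + 2 * Z * p * q) := by
    have hε' : ε ≠ 0 := hε.ne'
    have key : (ε * Y) * (ε * (X * p ^ 2) + (1 / ε) * (Y * q ^ 2) + 2 * Z * p * q)
        = (ε * Z * p + Y * q) ^ 2 + (ε ^ 2 * p ^ 2) * (X * Y - Z ^ 2) := by
      field_simp
      ring
    rw [key, hZ]
    simpa using h
  nlinarith [mul_pos hε hY]

/-- Weighted Hardy inequality: for `k > 1` there is a constant `C` (depending only on `k`)
such that for every `C¹` function `g` on `[0,1]` with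
`∫₀¹ s^k (g² + g'²) ds < ∞`, one has `∫₀¹ s^(k-2) g² ds ≤ C ∫₀¹ s^k (g² + g'²) ds`. -/
theorem hardy_weighted_inequality (k : ℝ) (hk : 1 < k) :
    ∃ C > 0, ∀ g : ℝ → ℝ, ContDiffOn ℝ 1 g (Set.Icc 0 1) →
      IntervalIntegrable (fun s => s ^ k * ((g s) ^ 2 + (deriv g s) ^ 2)) volume 0 1 →
      ∫ s in (0:ℝ)..1, s ^ (k - 2) * (g s) ^ 2
        ≤ C * ∫ s in (0:ℝ)..1, s ^ k * ((g s) ^ 2 + (deriv g s) ^ 2) := by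
  have hk0 : (0:ℝ) < k := by linarith
  have hk1 : (0:ℝ) < k - 1 := by linarith
  refine ⟨2 / (k - 1) * ((k + 2) + 2 / (k - 1)), by positivity, ?_⟩
  intro g hg _hInt
  set C := 2 / (k - 1) * ((k + 2) + 2 / (k - 1)) with hC
  -- notation
  set g' : ℝ → ℝ := derivWithin g (Icc 0 1) with hg'def
  have hgc : ContinuousOn g (Icc 0 1) := hg.continuousOn
  have hg'c : ContinuousOn g' (Icc 0 1) :=
    hg.continuousOn_derivWithin (uniqueDiffOn_Icc zero_lt_one) le_rfl
  -- derivative of g at interior points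
  have hder : ∀ x ∈ Ioo (0:ℝ) 1, HasDerivAt g (g' x) x := by
    intro x hx
    have hmem : Icc (0:ℝ) 1 ∈ nhds x := Icc_mem_nhds hx.1 hx.2
    have hdx : DifferentiableAt ℝ g x :=
      ((hg.differentiableOn one_ne_zero) x (Ioo_subset_Icc_self hx)).differentiableAt hmem
    have : derivWithin g (Icc 0 1) x = deriv g x := derivWithin_of_mem_nhds hmem
    rw [hg'def, this]
    exact hdx.hasDerivAt
  have hderiv_eq : ∀ x ∈ Ioo (0:ℝ) 1, deriv g x = g' x := by
    intro x hx
    exact (derivWithin_of_mem_nhds (Icc_mem_nhds hx.1 hx.2)).symm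
  -- continuity of rpow functions
  have hrpow : ∀ m : ℝ, 0 < m → ContinuousOn (fun s : ℝ => s ^ m) (Icc 0 1) := by
    intro m hm x _
    exact (Real.continuousAt_rpow_const x m (Or.inr hm.le)).continuousWithinAt
  -- φ : the reference integrand
  set φ : ℝ → ℝ := fun s => s ^ k * ((g s) ^ 2 + (g' s) ^ 2) with hφdef
  have hφc : ContinuousOn φ (Icc 0 1) :=
    (hrpow k hk0).mul ((hgc.pow 2).add (hg'c.pow 2))
  have hφint : IntervalIntegrable φ volume 0 1 := by
    apply ContinuousOn.intervalIntegrable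
    rwa [uIcc_of_le zero_le_one]
  have hφnonneg : ∀ s ∈ Icc (0:ℝ) 1, 0 ≤ φ s := by
    intro s hs
    have : (0:ℝ) ≤ s ^ k := Real.rpow_nonneg hs.1 k
    positivity
  set K := ∫ s in (0:ℝ)..1, φ s with hKdef
  have hKnonneg : 0 ≤ K := by
    rw [hKdef]
    apply intervalIntegral.integral_nonneg zero_le_one
    intro s hs; exact hφnonneg s hs
  -- the goal RHS equals K
  have hRHS : ∫ s in (0:ℝ)..1, s ^ k * ((g s) ^ 2 + (deriv g s) ^ 2) = K := by
    rw [hKdef]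
    apply intervalIntegral.integral_congr_ae
    have h1 : ∀ᵐ x : ℝ ∂volume, x ≠ 1 := by
      rw [MeasureTheory.ae_iff]
      simpa using Real.volume_singleton (x := 1)
    filter_upwards [h1] with x hx hxI
    rw [uIoc_of_le zero_le_one] at hxI
    have hxIoo : x ∈ Ioo (0:ℝ) 1 := ⟨hxI.1, lt_of_le_of_ne hxI.2 hx⟩
    rw [hderiv_eq x hxIoo]
  rw [hRHS]
  -- boundary bound : g 1 ^ 2 ≤ (k + 2) * K
  have hbound : (g 1) ^ 2 ≤ (k + 2) * K := by
    set G₂ : ℝ → ℝ := fun s => (k + 1) * s ^ k * (g s) ^ 2 + 2 * s ^ (k + 1) * g s * g' s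
      with hG₂def
    have hG₂c : ContinuousOn G₂ (Icc 0 1) := by
      apply ContinuousOn.add
      · exact (continuousOn_const.mul (hrpow k hk0)).mul (hgc.pow 2)
      · exact ((continuousOn_const.mul (hrpow (k+1) (by linarith))).mul hgc).mul hg'c
    have hFTC : ∫ s in (0:ℝ)..1, G₂ s
        = (fun s : ℝ => s ^ (k+1) * (g s) ^ 2) 1 - (fun s : ℝ => s ^ (k+1) * (g s) ^ 2) 0 := by
      refine intervalIntegral.integral_eq_sub_of_hasDeriv_right_of_le
        (f := fun s : ℝ => s ^ (k+1) * (g s) ^ 2) (f' := G₂) zero_le_one ?_ ?_ ?_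
      · exact (hrpow (k+1) (by linarith)).mul (hgc.pow 2)
      · intro x hx
        have hx0 : x ≠ 0 := ne_of_gt hx.1
        have h1 : HasDerivAt (fun s : ℝ => s ^ (k+1)) ((k+1) * x ^ (k+1-1)) x :=
          Real.hasDerivAt_rpow_const (Or.inl hx0)
        have h2 : HasDerivAt (fun s => (g s) ^ 2) (2 * g x ^ 1 * g' x) x := by
          simpa using (hder x hx).fun_pow 2
        have h3 := h1.mul h2
        have hexp : k + 1 - 1 = k := by ring
        rw [hexp] at h3
        have : (k + 1) * x ^ k * g x ^ 2 + x ^ (k + 1) * (2 * g x ^ 1 * g' x) = G₂ x := by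
          rw [hG₂def]; ring
        rw [this] at h3
        exact h3.hasDerivWithinAt
      · apply ContinuousOn.intervalIntegrable
        rwa [uIcc_of_le zero_le_one]
    simp only [Real.one_rpow, Real.zero_rpow (by linarith : k + 1 ≠ 0)] at hFTC
    have hmono : ∫ s in (0:ℝ)..1, G₂ s ≤ ∫ s in (0:ℝ)..1, (k + 2) * φ s := by
      apply intervalIntegral.integral_mono_on zero_le_one
      · apply ContinuousOn.intervalIntegrable; rwa [uIcc_of_le zero_le_one]
      · exact hφint.const_mul _
      · intro s hs
        show (k + 1) * s ^ k * (g s) ^ 2 + 2 * s ^ (k+1) * g s * g' s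
          ≤ (k + 2) * (s ^ k * ((g s) ^ 2 + (g' s) ^ 2))
        rcases eq_or_lt_of_le hs.1 with h0 | h0
        · rw [← h0]
          rw [Real.zero_rpow (by linarith : k + 1 ≠ 0), Real.zero_rpow (ne_of_gt hk0)]
          ring_nf
          exact le_refl 0
        · have hY : (0:ℝ) < s ^ k := Real.rpow_pos_of_pos h0 k
          have hW : s ^ (k+1) = s * s ^ k := by
            rw [Real.rpow_add h0, Real.rpow_one]; ring
          rw [hW]
          have hs1 : s ≤ 1 := hs.2
          nlinarith [mul_nonneg (mul_nonneg hY.le (by linarith : (0:ℝ) ≤ 1 - s))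
              (add_nonneg (sq_nonneg (g s)) (sq_nonneg (g' s))),
            mul_nonneg (mul_nonneg hY.le h0.le) (sq_nonneg (g s - g' s)),
            mul_nonneg (by linarith : (0:ℝ) ≤ k + 1) (mul_nonneg hY.le (sq_nonneg (g' s)))]
    have : ∫ s in (0:ℝ)..1, (k + 2) * φ s = (k + 2) * K := by
      rw [hKdef, intervalIntegral.integral_const_mul]
    linarith [hFTC, hmono, this]
  -- ψ : the target integrand, integrable on [0,1]
  set ψ : ℝ → ℝ := fun s => s ^ (k - 2) * (g s) ^ 2 with hψdef
  have hψc : ∀ a : ℝ, 0 < a → ContinuousOn ψ (Icc a 1) := by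
    intro a ha
    apply ContinuousOn.mul _ ((hgc.mono (Icc_subset_Icc ha.le le_rfl)).pow 2)
    intro x hx
    exact (Real.continuousAt_rpow_const x (k-2) (Or.inl (by linarith [hx.1]))).continuousWithinAt
  have hψnonneg : ∀ s ∈ Icc (0:ℝ) 1, 0 ≤ ψ s := by
    intro s hs
    have : (0:ℝ) ≤ s ^ (k-2) := Real.rpow_nonneg hs.1 _
    positivity
  obtain ⟨M, hM⟩ := (isCompact_Icc (a := (0:ℝ)) (b := 1)).exists_bound_of_continuousOn hgc
  have hψint : IntegrableOn ψ (Icc (0:ℝ) 1) volume := by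
    rw [integrableOn_Icc_iff_integrableOn_Ioc]
    have hrint : IntegrableOn (fun s : ℝ => M ^ 2 * s ^ (k - 2)) (Ioc (0:ℝ) 1) volume := by
      have := intervalIntegral.intervalIntegrable_rpow' (a := (0:ℝ)) (b := 1)
        (r := k - 2) (by linarith)
      rw [intervalIntegrable_iff_integrableOn_Ioc_of_le zero_le_one] at this
      exact this.const_mul _
    apply Integrable.mono' hrint
    · apply ContinuousOn.aestronglyMeasurable _ measurableSet_Ioc
      apply ContinuousOn.mul
      · intro x hx
        exact (Real.continuousAt_rpow_const x (k-2)
          (Or.inl (ne_of_gt hx.1))).continuousWithinAt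
      · exact (hgc.mono Ioc_subset_Icc_self).pow 2
    · rw [ae_restrict_iff' measurableSet_Ioc]
      filter_upwards with s hs
      have hs0 : (0:ℝ) ≤ s ^ (k - 2) := Real.rpow_nonneg hs.1.le _
      have hgs : |g s| ≤ M := hM s ⟨hs.1.le, hs.2⟩
      have hM0 : 0 ≤ M := le_trans (abs_nonneg _) hgs
      have : (g s) ^ 2 ≤ M ^ 2 := by
        rw [← sq_abs]; exact pow_le_pow_left₀ (abs_nonneg _) hgs 2
      show ‖s ^ (k-2) * (g s) ^ 2‖ ≤ M ^ 2 * s ^ (k-2)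
      rw [Real.norm_eq_abs, abs_of_nonneg (by positivity)]
      calc s ^ (k-2) * (g s)^2 ≤ s ^ (k-2) * M ^ 2 := by
            exact mul_le_mul_of_nonneg_left this hs0
        _ = M ^ 2 * s ^ (k-2) := by ring
  -- the uniform bound on [a,1]
  have hmain : ∀ a ∈ Ioo (0:ℝ) 1, ∫ s in a..1, ψ s ≤ C * K := by
    intro a ha
    set G₁ : ℝ → ℝ := fun s => (k - 1) * s ^ (k-2) * (g s) ^ 2 + 2 * s ^ (k-1) * g s * g' s
      with hG₁def
    have hsubset : Icc a 1 ⊆ Icc (0:ℝ) 1 := Icc_subset_Icc ha.1.le le_rfl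
    have hrpowa : ∀ m : ℝ, ContinuousOn (fun s : ℝ => s ^ m) (Icc a 1) := by
      intro m x hx
      exact (Real.continuousAt_rpow_const x m (Or.inl (by linarith [ha.1, hx.1]))).continuousWithinAt
    have hG₁c : ContinuousOn G₁ (Icc a 1) := by
      apply ContinuousOn.add
      · exact (continuousOn_const.mul (hrpowa (k-2))).mul ((hgc.mono hsubset).pow 2)
      · exact ((continuousOn_const.mul (hrpowa (k-1))).mul (hgc.mono hsubset)).mul
          (hg'c.mono hsubset)
    have hFTC : ∫ s in a..1, G₁ s
        = (fun s : ℝ => s ^ (k-1) * (g s) ^ 2) 1 - (fun s : ℝ => s ^ (k-1) * (g s) ^ 2) a := by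
      refine intervalIntegral.integral_eq_sub_of_hasDeriv_right_of_le
        (f := fun s : ℝ => s ^ (k-1) * (g s) ^ 2) (f' := G₁) ha.2.le ?_ ?_ ?_
      · exact (hrpowa (k-1)).mul ((hgc.mono hsubset).pow 2)
      · intro x hx
        have hxI : x ∈ Ioo (0:ℝ) 1 := ⟨lt_trans ha.1 hx.1, hx.2⟩
        have h1 : HasDerivAt (fun s : ℝ => s ^ (k-1)) ((k-1) * x ^ (k-1-1)) x :=
          Real.hasDerivAt_rpow_const (Or.inl (ne_of_gt hxI.1))
        have h2 : HasDerivAt (fun s => (g s) ^ 2) (2 * g x ^ 1 * g' x) x := by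
          simpa using (hder x hxI).fun_pow 2
        have h3 := h1.mul h2
        have hexp : k - 1 - 1 = k - 2 := by ring
        rw [hexp] at h3
        have : (k - 1) * x ^ (k-2) * g x ^ 2 + x ^ (k-1) * (2 * g x ^ 1 * g' x) = G₁ x := by
          rw [hG₁def]; ring
        rw [this] at h3
        exact h3.hasDerivWithinAt
      · apply ContinuousOn.intervalIntegrable
        rwa [uIcc_of_le ha.2.le]
    have hboundary : ∫ s in a..1, G₁ s ≤ (g 1) ^ 2 := by
      simp only [Real.one_rpow] at hFTC
      rw [hFTC]
      have h1 : (0:ℝ) ≤ a ^ (k-1) * (g a)^2 := by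
        have := Real.rpow_nonneg ha.1.le (k-1)
        positivity
      linarith
    -- pointwise lower bound for G₁
    have hptwise : ∀ s ∈ Icc a 1,
        (k-1)/2 * ψ s - (2/(k-1)) * (s ^ k * (g' s)^2) ≤ G₁ s := by
      intro s hs
      have hs0 : (0:ℝ) < s := lt_of_lt_of_le ha.1 hs.1
      have hZ : (s ^ (k-1)) ^ 2 = s ^ (k-2) * s ^ k := by
        rw [← Real.rpow_natCast (s ^ (k-1)) 2, ← Real.rpow_mul hs0.le, ← Real.rpow_add hs0]
        norm_num
        ring_nf
      have hY : (0:ℝ) < s ^ k := Real.rpow_pos_of_pos hs0 k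
      have key := hardy_amgm ((k-1)/2) (s ^ (k-2)) (s ^ k) (s ^ (k-1)) (g s) (g' s)
        (by linarith) hY hZ
      show (k-1)/2 * (s ^ (k-2) * (g s) ^ 2) - (2/(k-1)) * (s ^ k * (g' s)^2)
        ≤ (k - 1) * s ^ (k-2) * (g s) ^ 2 + 2 * s ^ (k-1) * g s * g' s
      have h1e : 1 / ((k-1)/2) = 2/(k-1) := by
        field_simp
      rw [h1e] at key
      nlinarith [key]
    have hψi : IntervalIntegrable ψ volume a 1 := by
      apply ContinuousOn.intervalIntegrable
      rw [uIcc_of_le ha.2.le]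
      exact hψc a ha.1
    have hρi : IntervalIntegrable (fun s => s ^ k * (g' s)^2) volume a 1 := by
      apply ContinuousOn.intervalIntegrable
      rw [uIcc_of_le ha.2.le]
      exact (hrpowa k).mul ((hg'c.mono hsubset).pow 2)
    have hintmono : ∫ s in a..1, ((k-1)/2 * ψ s - (2/(k-1)) * (s ^ k * (g' s)^2))
        ≤ ∫ s in a..1, G₁ s := by
      apply intervalIntegral.integral_mono_on ha.2.le
      · exact (hψi.const_mul _).sub (hρi.const_mul _)
      · apply ContinuousOn.intervalIntegrable; rwa [uIcc_of_le ha.2.le]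
      · exact hptwise
    have hsplit : ∫ s in a..1, ((k-1)/2 * ψ s - (2/(k-1)) * (s ^ k * (g' s)^2))
        = (k-1)/2 * (∫ s in a..1, ψ s) - (2/(k-1)) * ∫ s in a..1, s ^ k * (g' s)^2 := by
      rw [intervalIntegral.integral_sub (hψi.const_mul _) (hρi.const_mul _),
        intervalIntegral.integral_const_mul, intervalIntegral.integral_const_mul]
    -- ∫ₐ¹ s^k g'^2 ≤ K
    have hρK : ∫ s in a..1, s ^ k * (g' s)^2 ≤ K := by
      have h1 : ∫ s in a..1, s ^ k * (g' s)^2 ≤ ∫ s in a..1, φ s := by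
        apply intervalIntegral.integral_mono_on ha.2.le hρi
        · apply ContinuousOn.intervalIntegrable
          rw [uIcc_of_le ha.2.le]
          exact hφc.mono hsubset
        · intro s hs
          have hY : (0:ℝ) ≤ s ^ k := Real.rpow_nonneg (le_trans ha.1.le hs.1) k
          show s ^ k * (g' s)^2 ≤ s ^ k * ((g s) ^ 2 + (g' s) ^ 2)
          nlinarith [mul_nonneg hY (sq_nonneg (g s))]
      have h2 : ∫ s in a..1, φ s ≤ K := by
        rw [hKdef]
        have hadd : (∫ s in (0:ℝ)..a, φ s) + ∫ s in a..1, φ s = ∫ s in (0:ℝ)..1, φ s := by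
          apply intervalIntegral.integral_add_adjacent_intervals
          · apply ContinuousOn.intervalIntegrable
            rw [uIcc_of_le ha.1.le]
            exact hφc.mono (Icc_subset_Icc le_rfl ha.2.le)
          · apply ContinuousOn.intervalIntegrable
            rw [uIcc_of_le ha.2.le]
            exact hφc.mono hsubset
        have hpos : 0 ≤ ∫ s in (0:ℝ)..a, φ s := by
          apply intervalIntegral.integral_nonneg ha.1.le
          intro s hs
          exact hφnonneg s ⟨hs.1, le_trans hs.2 ha.2.le⟩
        linarith
      linarith
    -- put together
    have hKey : (k-1)/2 * (∫ s in a..1, ψ s) ≤ (g 1)^2 + (2/(k-1)) * K := by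
      have h2k : (0:ℝ) < 2/(k-1) := by positivity
      nlinarith [hintmono, hboundary, hsplit, hρK]
    have hfin : ∫ s in a..1, ψ s ≤ (2/(k-1)) * ((g 1)^2 + (2/(k-1)) * K) := by
      have h2 : (0:ℝ) < (k-1)/2 := by positivity
      rw [div_mul_eq_mul_div, le_div_iff₀ hk1]
      nlinarith [hKey]
    calc ∫ s in a..1, ψ s ≤ (2/(k-1)) * ((g 1)^2 + (2/(k-1)) * K) := hfin
      _ ≤ (2/(k-1)) * ((k+2) * K + (2/(k-1)) * K) := by
          apply mul_le_mul_of_nonneg_left _ (by positivity)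
          linarith [hbound]
      _ = C * K := by rw [hC]; ring
  -- limiting argument
  have hcont : ContinuousOn (fun a => ∫ s in a..1, ψ s) (Icc (0:ℝ) 1) := by
    have := intervalIntegral.continuousOn_primitive_interval_left
      (f := ψ) (μ := volume) (a := (0:ℝ)) (b := 1) (by rwa [uIcc_of_le zero_le_one])
    rwa [uIcc_of_le zero_le_one] at this
  have htend : Filter.Tendsto (fun a => ∫ s in a..1, ψ s) (nhdsWithin 0 (Ioo (0:ℝ) 1))
      (nhds (∫ s in (0:ℝ)..1, ψ s)) := by
    have h0 : (0:ℝ) ∈ Icc (0:ℝ) 1 := ⟨le_rfl, zero_le_one⟩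
    exact ((hcont 0 h0).mono_left (nhdsWithin_mono _ (Ioo_subset_Icc_self)))
  have hne : (nhdsWithin (0:ℝ) (Ioo (0:ℝ) 1)).NeBot := left_nhdsWithin_Ioo_neBot zero_lt_one
  have : ∫ s in (0:ℝ)..1, ψ s ≤ C * K := by
    apply le_of_tendsto htend
    filter_upwards [eventually_mem_nhdsWithin] with a ha
    exact hmain a ha
  exact this
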